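/- The reduction number of a canonical ideal is an invariant: if C and D are canonical ideals of a Cohen-Macaulay local ring R, then red(C) = red(D). -/

import Mathlib

open IsLocalRing

/-- `J` is a reduction of `I`. -/
def IsReductionOf (R : Type*) [CommRing R] (J I : Ideal R) : Prop :=
  J ≤ I ∧ ∃ n : ℕ, I ^ (n + 1) = J * I ^ n

/-- `J` is a minimal reduction of `I`: a reduction containing no strictly smaller reduction. -/
def IsMinimalReduction (R : Type*) [CommRing R] (J I : Ideal R) : Prop :=
  IsReductionOf R J I ∧ ∀ J' : Ideal R, J' ≤ J → IsReductionOf R J' I → J' = J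

/-- `r` is the reduction number of `I`: the least `r` with `I^(r+1) = J·I^r` for some
minimal reduction `J` of `I`. -/
def HasReductionNumber (R : Type*) [CommRing R] (I : Ideal R) (r : ℕ) : Prop :=
  (∃ J : Ideal R, IsMinimalReduction R J I ∧ I ^ (r + 1) = J * I ^ r) ∧
    ∀ s : ℕ, (∃ J : Ideal R, IsMinimalReduction R J I ∧ I ^ (s + 1) = J * I ^ s) → r ≤ s

/-- Two ideals are isomorphic as `R`-modules: they differ by multiplication by a unit `x/y`
of the total ring of fractions. -/
def IsIsomIdeal (R : Type*) [CommRing R] (I J : Ideal R) : Prop :=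
  ∃ x ∈ nonZeroDivisors R, ∃ y ∈ nonZeroDivisors R, Ideal.span {x} * I = Ideal.span {y} * J

section Aux
variable {R : Type*} [CommRing R]

lemma spanCancel_le {x : R} (hx : x ∈ nonZeroDivisors R) {A B : Ideal R}
    (h : Ideal.span {x} * A ≤ Ideal.span {x} * B) : A ≤ B := by
  intro a ha
  have : x * a ∈ Ideal.span {x} * B :=
    h (Ideal.mul_mem_mul (Ideal.mem_span_singleton_self x) ha)
  obtain ⟨b, hb, hxb⟩ := Ideal.mem_span_singleton_mul.mp this
  rwa [(mul_cancel_left_mem_nonZeroDivisors hx).mp hxb] at hb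

lemma spanCancel {x : R} (hx : x ∈ nonZeroDivisors R) {A B : Ideal R}
    (h : Ideal.span {x} * A = Ideal.span {x} * B) : A = B :=
  le_antisymm (spanCancel_le hx h.le) (spanCancel_le hx h.ge)

lemma exists_span_mul_eq {x : R} {K : Ideal R} (hK : K ≤ Ideal.span {x}) :
    ∃ A : Ideal R, Ideal.span {x} * A = K := by
  refine ⟨Submodule.comap (LinearMap.mul R R x) K, le_antisymm ?_ ?_⟩
  · rw [Ideal.span_singleton_mul_le_iff]
    intro z hz
    exact hz
  · intro z hz
    obtain ⟨a, ha⟩ := Ideal.mem_span_singleton'.mp (hK hz)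
    have hm : a ∈ Submodule.comap (LinearMap.mul R R x) K := by
      simp only [Submodule.mem_comap, LinearMap.mul_apply']
      rwa [mul_comm, ha]
    have : z = x * a := by rw [mul_comm, ha]
    rw [this]
    exact Ideal.mul_mem_mul (Ideal.mem_span_singleton_self x) hm

lemma pow_transfer {x y : R} (hx : x ∈ nonZeroDivisors R) {C D J J' : Ideal R}
    (h : Ideal.span {x} * C = Ideal.span {y} * D)
    (hJ : Ideal.span {x} * J' = Ideal.span {y} * J)
    {k : ℕ} (hk : D ^ (k + 1) = J * D ^ k) : C ^ (k + 1) = J' * C ^ k := by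
  have key : Ideal.span {x} ^ (k+1) * C ^ (k + 1) = Ideal.span {x} ^ (k+1) * (J' * C ^ k) := by
    calc Ideal.span {x} ^ (k+1) * C ^ (k + 1) = (Ideal.span {x} * C) ^ (k+1) := by
            rw [mul_pow]
      _ = (Ideal.span {y} * D) ^ (k+1) := by rw [h]
      _ = Ideal.span {y} ^ (k+1) * (J * D ^ k) := by rw [mul_pow, hk]
      _ = (Ideal.span {y} * J) * (Ideal.span {y} * D) ^ k := by ring
      _ = (Ideal.span {x} * J') * (Ideal.span {x} * C) ^ k := by rw [hJ, h]
      _ = Ideal.span {x} ^ (k+1) * (J' * C ^ k) := by ring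
  rw [Ideal.span_singleton_pow] at key
  exact spanCancel (pow_mem hx (k+1)) key

lemma minred_transfer {x y : R} (hx : x ∈ nonZeroDivisors R) (hy : y ∈ nonZeroDivisors R)
    {C D J : Ideal R} (h : Ideal.span {x} * C = Ideal.span {y} * D)
    (hJ : IsMinimalReduction R J D) {k : ℕ} (hk : D ^ (k + 1) = J * D ^ k) :
    ∃ J' : Ideal R, IsMinimalReduction R J' C ∧ C ^ (k + 1) = J' * C ^ k := by
  obtain ⟨⟨hJD, n, hn⟩, hmin⟩ := hJ
  have hK : Ideal.span {y} * J ≤ Ideal.span {x} := by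
    calc Ideal.span {y} * J ≤ Ideal.span {y} * D := Ideal.mul_mono_right hJD
      _ = Ideal.span {x} * C := h.symm
      _ ≤ Ideal.span {x} := Ideal.mul_le_left
  obtain ⟨J', hJ'⟩ := exists_span_mul_eq hK
  have hJ'C : J' ≤ C := spanCancel_le hx (by rw [hJ'] ; calc Ideal.span {y} * J ≤ Ideal.span {y} * D := Ideal.mul_mono_right hJD
      _ = Ideal.span {x} * C := h.symm)
  refine ⟨J', ⟨⟨hJ'C, n, pow_transfer hx h hJ' hn⟩, ?_⟩, pow_transfer hx h hJ' hk⟩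
  intro J'' hle ⟨hJ''C, m, hm⟩
  have hK2 : Ideal.span {x} * J'' ≤ Ideal.span {y} := by
    calc Ideal.span {x} * J'' ≤ Ideal.span {x} * J' := Ideal.mul_mono_right hle
      _ = Ideal.span {y} * J := hJ'
      _ ≤ Ideal.span {y} := Ideal.mul_le_left
  obtain ⟨J''', hJ'''⟩ := exists_span_mul_eq hK2
  have hle3 : J''' ≤ J := spanCancel_le hy (by rw [hJ''', ← hJ'] ; exact Ideal.mul_mono_right hle)
  have heq3 : J''' = J := by
    refine hmin J''' hle3 ⟨le_trans hle3 hJD, m, pow_transfer hy h.symm hJ''' hm⟩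
  refine spanCancel hx ?_
  rw [hJ', ← heq3, hJ''']
end Aux

/-- the reduction number of a canonical ideal is an invariant: if `C` and `D` are
canonical ideals of a Cohen-Macaulay local ring `R`, then `red(C) = red(D)`.  Canonical
ideals contain regular elements and, being canonical modules, are unique up to
multiplication by a unit of the total ring of fractions (`IsIsomIdeal`). -/
theorem reduction_number_canonical_invariant
    (R : Type*) [CommRing R] [IsLocalRing R] [IsNoetherianRing R]
    [Infinite (ResidueField R)]
    (hdim : 1 ≤ ringKrullDim R)
    (C D : Ideal R)
    (hCreg : ∃ x ∈ C, x ∈ nonZeroDivisors R)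
    (hDreg : ∃ x ∈ D, x ∈ nonZeroDivisors R)
    (hiso : IsIsomIdeal R C D)
    (r s : ℕ)
    (hr : HasReductionNumber R C r) (hs : HasReductionNumber R D s) :
    r = s := by
  obtain ⟨x, hx, y, hy, h⟩ := hiso
  obtain ⟨J, hJ, hJs⟩ := hs.1
  obtain ⟨K, hK, hKr⟩ := hr.1
  have h1 : r ≤ s := hr.2 s (minred_transfer hx hy h hJ hJs)
  have h2 : s ≤ r := hs.2 r (minred_transfer hy hx h.symm hK hKr)
  omega
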